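/- Let f : ℝⁿ → (−∞,+∞] be a polyhedral (convex piecewise linear, lsc, proper) function, x̄ ∈ dom f, and v̄ ∈ ∂f(x̄). Then the second subderivative of f at x̄ for v̄ is the indicator function of the critical cone: d²f(x̄ | v̄)(w) = 0 if df(x̄)(w) = ⟨v̄, w⟩, and +∞ otherwise. -/

import Mathlib

open Filter Topology Matrix

noncomputable section

abbrev Mat (m n : ℕ) := Matrix (Fin m) (Fin n) ℝ

namespace Paper

/-- Frobenius (trace) inner product on real matrices. -/
def finner {m n : ℕ} (X Y : Mat m n) : ℝ := ∑ i, ∑ j, X i j * Y i j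

/-- Frobenius norm. -/
def fnorm {m n : ℕ} (X : Mat m n) : ℝ := Real.sqrt (finner X X)

/-- Euclidean inner product on `ℝⁿ`. -/
def vinner {n : ℕ} (x y : Fin n → ℝ) : ℝ := ∑ i, x i * y i

/-- Euclidean norm on `ℝⁿ`. -/
def vnorm {n : ℕ} (x : Fin n → ℝ) : ℝ := Real.sqrt (vinner x x)

/-- Eigenvalues of a real symmetric matrix, arranged in nonincreasing order. -/
def eigs {k : ℕ} (A : Matrix (Fin k) (Fin k) ℝ) (hA : A.IsHermitian) : Fin k → ℝ :=
  fun i => hA.eigenvalues (Tuple.sort (fun j => -(hA.eigenvalues j)) i)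

/-- Singular values of a real `m × n` matrix, arranged in nonincreasing order. -/
def svals {m n : ℕ} (X : Mat m n) : Fin n → ℝ :=
  fun i => Real.sqrt (eigs (Xᵀ * X) (by simpa [Matrix.conjTranspose_eq_transpose_of_trivial] using
    Matrix.isHermitian_conjTranspose_mul_self X) i)

/-- The `m × n` matrix with `x` on the diagonal and zeros elsewhere. -/
def mdiag {m n : ℕ} (x : Fin n → ℝ) : Mat m n :=
  fun i j => if (i : ℕ) = (j : ℕ) then x j else 0

/-- The symmetric block matrix `B(X) = [[0, X], [Xᵀ, 0]]`, reindexed over `Fin (m+n)`. -/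
def bmat {m n : ℕ} (X : Mat m n) : Matrix (Fin (m + n)) (Fin (m + n)) ℝ :=
  Matrix.reindex finSumFinEquiv finSumFinEquiv (Matrix.fromBlocks 0 X Xᵀ 0)

lemma bmat_isHermitian {m n : ℕ} (X : Mat m n) : (bmat X).IsHermitian := by
  rw [Matrix.IsHermitian]
  ext i j
  simp only [bmat, Matrix.conjTranspose_apply, Matrix.reindex_apply, Matrix.submatrix_apply,
    star_trivial]
  rcases hi : finSumFinEquiv.symm i with a | a <;> rcases hj : finSumFinEquiv.symm j with b | b <;>
    simp [Matrix.fromBlocks, Matrix.transpose_apply]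

/-- Eigenvalues of `B(X)` in nonincreasing order. -/
def beigs {m n : ℕ} (X : Mat m n) : Fin (m + n) → ℝ :=
  eigs (bmat X) (bmat_isHermitian X)

/-- `Q` is a signed permutation matrix. -/
def IsSignedPerm {n : ℕ} (Q : Matrix (Fin n) (Fin n) ℝ) : Prop :=
  ∃ (e : Equiv.Perm (Fin n)) (s : Fin n → ℝ), (∀ i, s i = 1 ∨ s i = -1) ∧
    ∀ i j, Q i j = if j = e i then s i else 0

/-- A set of vectors invariant under all signed permutations. -/
def AbsSymSet {n : ℕ} (K : Set (Fin n → ℝ)) : Prop :=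
  ∀ Q, IsSignedPerm Q → ∀ x ∈ K, Q.mulVec x ∈ K

/-- An extended-real-valued absolutely symmetric function. -/
def AbsSymFun {n : ℕ} (f : (Fin n → ℝ) → EReal) : Prop :=
  ∀ Q, IsSignedPerm Q → ∀ x, f (Q.mulVec x) = f x

/-- Euclidean distance from a point to a set in `ℝⁿ`. -/
def vdist {n : ℕ} (x : Fin n → ℝ) (K : Set (Fin n → ℝ)) : ℝ :=
  sInf ((fun y => vnorm (x - y)) '' K)

/-- Frobenius distance from a matrix to a set of matrices. -/
def mdist {m n : ℕ} (X : Mat m n) (Γ : Set (Mat m n)) : ℝ :=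
  sInf ((fun Y => fnorm (X - Y)) '' Γ)

section Variational

variable {E : Type*} [AddCommGroup E] [Module ℝ E] [TopologicalSpace E]

/-- The subderivative `dg(x)(w) = liminf_{t↓0, w'→w} (g(x+tw') - g(x))/t`. -/
def subderiv (g : E → EReal) (x w : E) : EReal :=
  liminf (fun p : ℝ × E => ((p.1⁻¹ : ℝ) : EReal) * (g (x + p.1 • p.2) - g x))
    ((𝓝[>] (0 : ℝ)) ×ˢ 𝓝 w)

/-- The second-order difference quotient `Δ²_τ g(x | v)(w)`. -/
def secondQuot (ip : E → E → ℝ) (g : E → EReal) (x v : E) (τ : ℝ) (w : E) : EReal :=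
  ((2 / τ ^ 2 : ℝ) : EReal) * (g (x + τ • w) - g x - ((τ * ip v w : ℝ) : EReal))

/-- The second subderivative `d²g(x | v)(w)`. -/
def secondSubderiv (ip : E → E → ℝ) (g : E → EReal) (x v w : E) : EReal :=
  liminf (fun p : ℝ × E => secondQuot ip g x v p.1 p.2) ((𝓝[>] (0 : ℝ)) ×ˢ 𝓝 w)

/-- The parabolic difference quotient `Δ²_τ g(x)(w | z)`. -/
def parabQuot (g : E → EReal) (x w : E) (τ : ℝ) (z : E) : EReal :=
  ((2 / τ ^ 2 : ℝ) : EReal) *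
    (g (x + τ • w + (τ ^ 2 / 2) • z) - g x - ((τ : ℝ) : EReal) * subderiv g x w)

/-- The parabolic subderivative `d²g(x)(w | z)`. -/
def parabolicSubderiv (g : E → EReal) (x w z : E) : EReal :=
  liminf (fun p : ℝ × E => parabQuot g x w p.1 p.2) ((𝓝[>] (0 : ℝ)) ×ˢ 𝓝 z)

/-- Parabolic epi-differentiability of `g` at `x` for `w`. -/
def ParabEpiDiffAt (g : E → EReal) (x w : E) : Prop :=
  (∃ z, parabolicSubderiv g x w z < ⊤) ∧
  ∀ z : E, ∀ t : ℕ → ℝ, (∀ k, 0 < t k) → Tendsto t atTop (𝓝 0) →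
    ∃ zk : ℕ → E, Tendsto zk atTop (𝓝 z) ∧
      Tendsto (fun k => parabQuot g x w (t k) (zk k)) atTop (𝓝 (parabolicSubderiv g x w z))

/-- The (contingent) tangent cone to `C` at `x`. -/
def tangentConeOf (C : Set E) (x : E) : Set E :=
  {w | ∃ t : ℕ → ℝ, ∃ w' : ℕ → E, (∀ k, 0 < t k) ∧ Tendsto t atTop (𝓝 0) ∧
    Tendsto w' atTop (𝓝 w) ∧ ∀ k, x + t k • w' k ∈ C}

/-- The second-order tangent set to `C` at `x` for `w`. -/
def tangentCone2Of (C : Set E) (x w : E) : Set E :=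
  {u | ∃ t : ℕ → ℝ, ∃ u' : ℕ → E, (∀ k, 0 < t k) ∧ Tendsto t atTop (𝓝 0) ∧
    Tendsto u' atTop (𝓝 u) ∧ ∀ k, x + t k • w + (t k ^ 2 / 2) • u' k ∈ C}

/-- Parabolic derivability of the set `C` at `x` for `w`. -/
def ParabolicallyDerivable (C : Set E) (x w : E) : Prop :=
  (tangentCone2Of C x w).Nonempty ∧
  ∀ u ∈ tangentCone2Of C x w, ∃ ε > (0 : ℝ), ∃ ξ : ℝ → E,
    (∀ t ∈ Set.Icc (0 : ℝ) ε, ξ t ∈ C) ∧ ξ 0 = x ∧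
    Tendsto (fun t : ℝ => t⁻¹ • (ξ t - x)) (𝓝[>] 0) (𝓝 w) ∧
    Tendsto (fun t : ℝ => (2 / t ^ 2) • (ξ t - x - t • w)) (𝓝[>] 0) (𝓝 u)

/-- The convex subdifferential of `g` at `x` (w.r.t. the pairing `ip`). -/
def convSubdiff (ip : E → E → ℝ) (g : E → EReal) (x : E) : Set E :=
  {v | ∀ y, ((ip v (y - x) : ℝ) : EReal) + g x ≤ g y}

/-- Convexity for extended-real-valued functions. -/
def ConvexEReal (g : E → EReal) : Prop :=
  ∀ x y : E, ∀ t : ℝ, 0 ≤ t → t ≤ 1 →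
    g (t • x + (1 - t) • y) ≤ ((t : ℝ) : EReal) * g x + ((1 - t : ℝ) : EReal) * g y

end Variational

/-- Local Lipschitz continuity of `f` relative to its domain (everywhere on the domain). -/
def LocLipRelDom {n : ℕ} (f : (Fin n → ℝ) → EReal) : Prop :=
  ∀ x, f x ≠ ⊤ → ∃ l ≥ (0 : ℝ), ∃ U ∈ 𝓝 x, ∀ y ∈ U, ∀ z ∈ U, f y ≠ ⊤ → f z ≠ ⊤ →
    |(f y).toReal - (f z).toReal| ≤ l * vnorm (y - z)

/-- The columns of `U` with indices `r, r+1, …, k-1`. -/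
def colsFrom {k : ℕ} (r : ℕ) (U : Matrix (Fin k) (Fin k) ℝ) :
    Matrix (Fin k) (Fin (k - r)) ℝ :=
  fun i j => U i ⟨r + (j : ℕ), by have := j.isLt; omega⟩

/-- The first `r` columns of `U`. -/
def firstCols {k : ℕ} (r : ℕ) (h : r ≤ k) (U : Matrix (Fin k) (Fin k) ℝ) :
    Matrix (Fin k) (Fin r) ℝ :=
  fun i j => U i (Fin.castLE h j)

/-- The submatrix of `M` with rows `a ≤ · < b` and columns `c ≤ · < d`. -/
def subBlock {p q : ℕ} (M : Matrix (Fin p) (Fin q) ℝ) (a b c d : ℕ)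
    (h1 : b ≤ p) (h2 : d ≤ q) : Matrix (Fin (b - a)) (Fin (d - c)) ℝ :=
  fun i j => M ⟨a + (i : ℕ), by have := i.isLt; omega⟩ ⟨c + (j : ℕ), by have := j.isLt; omega⟩

/-- Nuclear norm: the sum of all singular values. -/
def nucNorm {m n : ℕ} (A : Mat m n) : ℝ := ∑ j, svals A j

/-- `Ψₙ(X) = σ_{r+1}(X) + ⋯ + σ_n(X)`, the sum of the `n - r` smallest singular values. -/
def psiN {m n : ℕ} (r : ℕ) (X : Mat m n) : ℝ :=
  ∑ s : Fin n, if r ≤ (s : ℕ) then svals X s else 0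

/-- The regular (Fréchet) subdifferential of a real-valued function on matrices. -/
def regSubdiff {m n : ℕ} (g : Mat m n → ℝ) (X : Mat m n) : Set (Mat m n) :=
  {V | ∀ ε > (0 : ℝ), ∀ᶠ Y in 𝓝 X, g X + finner V (Y - X) - ε * fnorm (Y - X) ≤ g Y}

/-- Two square matrices admit a simultaneous ordered spectral decomposition. -/
def SimSpec {k : ℕ} (A B : Matrix (Fin k) (Fin k) ℝ) : Prop :=
  ∃ (W : Matrix (Fin k) (Fin k) ℝ) (a b : Fin k → ℝ), Wᵀ * W = 1 ∧
    Antitone a ∧ Antitone b ∧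
    A = W * Matrix.diagonal a * Wᵀ ∧ B = W * Matrix.diagonal b * Wᵀ

/-- Two rectangular matrices admit a simultaneous ordered singular value decomposition. -/
def SimSVD {p q : ℕ} (A B : Matrix (Fin p) (Fin q) ℝ) : Prop :=
  ∃ (U : Matrix (Fin p) (Fin p) ℝ) (V : Matrix (Fin q) (Fin q) ℝ)
    (a b : Fin q → ℝ), Uᵀ * U = 1 ∧ Vᵀ * V = 1 ∧
    Antitone a ∧ Antitone b ∧ (∀ j, 0 ≤ a j) ∧ (∀ j, 0 ≤ b j) ∧
    A = U * mdiag (m := p) a * Vᵀ ∧ B = U * mdiag (m := p) b * Vᵀ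

end Paper

open Paper

/-- A proper polyhedral convex function: its epigraph is an intersection of finitely many
half-spaces (it is a polyhedral convex set). -/
def PolyhedralFun {n : ℕ} (f : (Fin n → ℝ) → EReal) : Prop :=
  (∀ x, f x ≠ ⊥) ∧ (∃ x, f x ≠ ⊤) ∧
  ∃ (k : ℕ) (a : Fin k → (Fin n → ℝ)) (c : Fin k → ℝ) (b : Fin k → ℝ),
    ∀ (x : Fin n → ℝ) (r : ℝ), f x ≤ (r : EReal) ↔ ∀ i, vinner (a i) x + c i * r ≤ b i

lemma my_vinner_add_smul {n : ℕ} (u y z : Fin n → ℝ) (t : ℝ) :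
    vinner u (y + t • z) = vinner u y + t * vinner u z := by
  simp only [vinner, Pi.add_apply, Pi.smul_apply, smul_eq_mul, Finset.mul_sum]
  rw [← Finset.sum_add_distrib]
  exact Finset.sum_congr rfl fun i _ => by ring

lemma my_vinner_smul {n : ℕ} (u z : Fin n → ℝ) (t : ℝ) :
    vinner u (t • z) = t * vinner u z := by
  have h := my_vinner_add_smul u 0 z t
  rw [zero_add] at h
  rw [h]
  simp [vinner]

lemma my_vinner_cont {n : ℕ} (u : Fin n → ℝ) : Continuous (vinner u) := by
  unfold Paper.vinner
  exact continuous_finset_sum _ fun i _ => continuous_const.mul (continuous_apply i)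

/-- For a polyhedral function `f`, `x̄ ∈ dom f` and `v̄ ∈ ∂f(x̄)`, the second subderivative
is the indicator of the critical cone: `d²f(x̄|v̄)(w) = 0` if `df(x̄)(w) = ⟨v̄,w⟩`,
and `+∞` otherwise. -/
theorem stmt12 {n : ℕ} (f : (Fin n → ℝ) → EReal) (hf : PolyhedralFun f)
    (x : Fin n → ℝ) (hx : f x ≠ ⊤) (v : Fin n → ℝ)
    (hv : v ∈ convSubdiff vinner f x) (w : Fin n → ℝ) :
    secondSubderiv vinner f x v w =
      if subderiv f x w = ((vinner v w : ℝ) : EReal) then (0 : EReal) else ⊤ := by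
  classical
  obtain ⟨hbot, hproper, k, a, c, b, hiff⟩ := hf
  set m : ℝ := (f x).toReal with hmdef
  have hm : f x = (m : EReal) := (EReal.coe_toReal hx (hbot x)).symm
  -- all c i are nonpositive
  have hc : ∀ i, c i ≤ 0 := by
    intro i
    by_contra hci
    push_neg at hci
    obtain ⟨x₀, hx₀⟩ := hproper
    have hm₀ : f x₀ = (((f x₀).toReal : ℝ) : EReal) := (EReal.coe_toReal hx₀ (hbot x₀)).symm
    set m₀ := (f x₀).toReal with hm₀def
    set r := max m₀ ((b i - vinner (a i) x₀) / c i + 1) with hrdef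
    have h1 : f x₀ ≤ (r : EReal) := by
      rw [hm₀]
      exact_mod_cast le_max_left _ _
    have h2 := (hiff x₀ r).1 h1 i
    have h3 : (b i - vinner (a i) x₀) / c i + 1 ≤ r := le_max_right _ _
    have h5 : c i * ((b i - vinner (a i) x₀) / c i + 1) = (b i - vinner (a i) x₀) + c i := by
      field_simp
    nlinarith [mul_le_mul_of_nonneg_left h3 hci.le]
  -- the affine pieces and the domain
  set ℓ : Fin k → (Fin n → ℝ) → ℝ := fun i y => (vinner (a i) y - b i) / (-c i) with hldef
  set D : (Fin n → ℝ) → Prop := fun y => ∀ i, c i = 0 → vinner (a i) y ≤ b i with hDdef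
  set Ineg : Finset (Fin k) := Finset.univ.filter (fun i => c i < 0) with hInegdef
  have hmemI : ∀ i, i ∈ Ineg ↔ c i < 0 := by
    intro i; rw [hInegdef, Finset.mem_filter]; simp
  have hiff' : ∀ y (r : ℝ), f y ≤ (r : EReal) ↔ (D y ∧ ∀ i ∈ Ineg, ℓ i y ≤ r) := by
    intro y r
    rw [hiff]
    constructor
    · intro h
      constructor
      · intro i hci
        have hh := h i
        rw [hci, zero_mul, add_zero] at hh
        exact hh
      · intro i hi
        have hci : c i < 0 := (hmemI i).1 hi
        have hh := h i
        rw [hldef]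
        rw [div_le_iff₀ (by linarith : (0:ℝ) < -c i)]
        nlinarith
    · rintro ⟨hD, hl⟩ i
      rcases lt_or_eq_of_le (hc i) with hci | hci
      · have hh := hl i ((hmemI i).2 hci)
        rw [hldef] at hh
        rw [div_le_iff₀ (by linarith : (0:ℝ) < -c i)] at hh
        nlinarith
      · have hh := hD i hci
        rw [hci, zero_mul, add_zero]
        exact hh
  have hDx : D x ∧ ∀ i ∈ Ineg, ℓ i x ≤ m := (hiff' x m).1 (le_of_eq hm)
  have hIne : Ineg.Nonempty := by
    by_contra hne
    rw [Finset.not_nonempty_iff_eq_empty] at hne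
    have hall : ∀ (r : ℝ), f x ≤ (r : EReal) := by
      intro r
      rw [hiff' x r]
      exact ⟨hDx.1, fun i hi => by rw [hne] at hi; exact absurd hi (Finset.notMem_empty i)⟩
    have hbotx : f x = ⊥ := by
      rw [EReal.eq_bot_iff_forall_lt]
      intro y
      exact lt_of_le_of_lt (hall (y - 1)) (by exact_mod_cast sub_one_lt y)
    exact hbot x hbotx
  have hrep : ∀ y, D y → f y = ((Ineg.sup' hIne fun i => ℓ i y : ℝ) : EReal) := by
    intro y hDy
    have hle : f y ≤ ((Ineg.sup' hIne fun i => ℓ i y : ℝ) : EReal) :=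
      (hiff' y _).2 ⟨hDy, fun i hi => Finset.le_sup' (fun j => ℓ j y) hi⟩
    have hytop : f y ≠ ⊤ := by
      intro h
      rw [h] at hle
      exact absurd hle (by simp)
    have hy : f y = (((f y).toReal : ℝ) : EReal) := (EReal.coe_toReal hytop (hbot y)).symm
    have h2 : ∀ i ∈ Ineg, ℓ i y ≤ (f y).toReal := ((hiff' y _).1 (le_of_eq hy)).2
    have h3 : Ineg.sup' hIne (fun i => ℓ i y) ≤ (f y).toReal := Finset.sup'_le _ _ h2
    refine le_antisymm hle ?_
    rw [hy]
    exact_mod_cast h3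
  have hrep_top : ∀ y, ¬ D y → f y = ⊤ := by
    intro y hDy
    by_contra h
    have hy : f y = (((f y).toReal : ℝ) : EReal) := (EReal.coe_toReal h (hbot y)).symm
    exact hDy ((hiff' y _).1 (le_of_eq hy)).1
  have hmx : m = Ineg.sup' hIne fun i => ℓ i x := by
    have h := hrep x hDx.1
    rw [hm] at h
    exact_mod_cast h
  -- active pieces
  set J : Finset (Fin k) := Ineg.filter (fun i => ℓ i x = m) with hJdef
  have hJsub : J ⊆ Ineg := Finset.filter_subset _ _
  have hlJ : ∀ i ∈ J, ℓ i x = m := fun i hi => (Finset.mem_filter.1 hi).2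
  have hJne : J.Nonempty := by
    obtain ⟨j, hj, hje⟩ := Finset.exists_mem_eq_sup' hIne (fun i => ℓ i x)
    exact ⟨j, Finset.mem_filter.2 ⟨hj, by rw [← hje, ← hmx]⟩⟩
  set gd : Fin k → (Fin n → ℝ) → ℝ := fun i u => vinner (a i) u / (-c i) with hgddef
  have hl_aff : ∀ i (τ : ℝ) (u : Fin n → ℝ), ℓ i (x + τ • u) = ℓ i x + τ * gd i u := by
    intro i τ u
    rw [hldef, hgddef]
    simp only
    rw [my_vinner_add_smul]
    ring
  set hmax : (Fin n → ℝ) → ℝ := fun u => J.sup' hJne fun i => gd i u with hmaxdef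
  -- L1 : global affine lower bound
  have L1 : ∀ (τ : ℝ) (u : Fin n → ℝ), ((m + τ * hmax u : ℝ) : EReal) ≤ f (x + τ • u) := by
    intro τ u
    obtain ⟨j, hjJ, hje⟩ := Finset.exists_mem_eq_sup' hJne (fun i => gd i u)
    by_cases hD : D (x + τ • u)
    · rw [hrep _ hD, EReal.coe_le_coe_iff]
      have heq : ℓ j (x + τ • u) = m + τ * hmax u := by
        rw [hl_aff, hlJ j hjJ, hmaxdef]
        simp only
        rw [hje]
      rw [← heq]
      exact Finset.le_sup' (fun i => ℓ i (x + τ • u)) (hJsub hjJ)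
    · rw [hrep_top _ hD]
      exact le_top
  -- tangency condition
  set T : Prop := ∀ i, c i = 0 → vinner (a i) x = b i → vinner (a i) w ≤ 0 with hTdef
  have hev_pos : ∀ᶠ τ in 𝓝[>] (0:ℝ), 0 < τ := eventually_mem_nhdsWithin
  have hev_small : ∀ (e g : ℝ), 0 < e → ∀ᶠ τ in 𝓝[>] (0:ℝ), τ * g < e := by
    intro e g he
    have h1 : ∀ᶠ τ in 𝓝[>] (0:ℝ), τ ∈ Set.Ioo (0:ℝ) (e / (|g| + 1)) :=
      eventually_of_mem (Ioo_mem_nhdsGT_of_mem ⟨le_refl 0, by positivity⟩) (fun τ hτ => hτ)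
    refine h1.mono fun τ hτ => ?_
    have h2 : τ * (|g| + 1) < e := (lt_div_iff₀ (by positivity)).1 hτ.2
    have h3 : τ * g ≤ τ * |g| := mul_le_mul_of_nonneg_left (le_abs_self g) hτ.1.le
    nlinarith [abs_nonneg g]
  -- L2 : exact expansion along the fixed direction
  have L2 : T → ∀ᶠ τ in 𝓝[>] (0:ℝ), f (x + τ • w) = ((m + τ * hmax w : ℝ) : EReal) := by
    intro hT
    rw [hTdef] at hT
    have hDev : ∀ᶠ τ in 𝓝[>] (0:ℝ), D (x + τ • w) := by
      have hall : ∀ i, ∀ᶠ τ in 𝓝[>] (0:ℝ), (c i = 0 → vinner (a i) (x + τ • w) ≤ b i) := by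
        intro i
        by_cases hci : c i = 0
        · rcases eq_or_lt_of_le (hDx.1 i hci) with hact | hina
          · refine hev_pos.mono fun τ hτ _ => ?_
            rw [my_vinner_add_smul, ← hact]
            nlinarith [hT i hci hact]
          · refine ((hev_small (b i - vinner (a i) x) (vinner (a i) w) (by linarith)).and
              hev_pos).mono fun τ hτ _ => ?_
            rw [my_vinner_add_smul]
            linarith [hτ.1]
        · exact Eventually.of_forall fun τ h => absurd h hci
      have := eventually_all.2 hall
      refine this.mono fun τ hτ => ?_
      rw [hDdef]
      exact hτ
    have hsupev : ∀ᶠ τ in 𝓝[>] (0:ℝ), ∀ i ∈ Ineg, ℓ i (x + τ • w) ≤ m + τ * hmax w := by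
      rw [eventually_all_finset]
      intro i hi
      by_cases hiJ : i ∈ J
      · refine hev_pos.mono fun τ hτ => ?_
        rw [hl_aff, hlJ i hiJ]
        have hgb : gd i w ≤ hmax w := Finset.le_sup' (fun j => gd j w) hiJ
        nlinarith
      · have hlt : ℓ i x < m :=
          lt_of_le_of_ne (hDx.2 i hi) (fun h => hiJ (Finset.mem_filter.2 ⟨hi, h⟩))
        refine ((hev_small (m - ℓ i x) (gd i w - hmax w) (by linarith)).and
          hev_pos).mono fun τ hτ => ?_
        rw [hl_aff]
        nlinarith [hτ.1, mul_sub τ (gd i w) (hmax w)]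
    refine (hDev.and hsupev).mono fun τ hτ => ?_
    rw [hrep _ hτ.1]
    rw [EReal.coe_eq_coe_iff]
    refine le_antisymm (Finset.sup'_le _ _ hτ.2) ?_
    obtain ⟨j, hjJ, hje⟩ := Finset.exists_mem_eq_sup' hJne (fun i => gd i w)
    have heq : ℓ j (x + τ • w) = m + τ * hmax w := by
      rw [hl_aff, hlJ j hjJ, hmaxdef]
      simp only
      rw [hje]
    rw [← heq]
    exact Finset.le_sup' (fun i => ℓ i (x + τ • w)) (hJsub hjJ)
  -- subgradient inequality in affine form
  have hv' : ∀ (τ : ℝ) (u : Fin n → ℝ), ((m + τ * vinner v u : ℝ) : EReal) ≤ f (x + τ • u) := by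
    intro τ u
    have h1 := hv (x + τ • u)
    rw [hm, add_sub_cancel_left, my_vinner_smul] at h1
    have h2 : (m + τ * vinner v u : ℝ) = (τ * vinner v u + m : ℝ) := by ring
    rw [h2, EReal.coe_add]
    exact h1
  have hv_le_hmax : T → vinner v w ≤ hmax w := by
    intro hT
    obtain ⟨τ, hτpos, hτeq⟩ := (hev_pos.and (L2 hT)).exists
    have h1 := hv' τ w
    rw [hτeq, EReal.coe_le_coe_iff] at h1
    exact le_of_mul_le_mul_left (by linarith) hτpos
  -- the curve τ ↦ (τ, w) refines the product filter
  have hcurve : Filter.map (fun τ : ℝ => (τ, w)) (𝓝[>] (0:ℝ)) ≤ (𝓝[>] (0:ℝ)) ×ˢ 𝓝 w :=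
    Filter.Tendsto.prodMk tendsto_id tendsto_const_nhds
  have hfreq : ∀ (Q : ℝ × (Fin n → ℝ) → EReal) (cst : EReal),
      (∀ᶠ τ in 𝓝[>] (0:ℝ), Q (τ, w) ≤ cst) →
      liminf Q ((𝓝[>] (0:ℝ)) ×ˢ 𝓝 w) ≤ cst := by
    intro Q cst h
    exact liminf_le_of_frequently_le (((eventually_map.2 h).frequently).filter_mono hcurve)
      (by isBoundedDefault)
  -- lower semicontinuity-type bounds near w
  have hmax_lb : ∀ ε : ℝ, 0 < ε → ∀ᶠ w' in 𝓝 w, hmax w - ε < hmax w' := by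
    intro ε hε
    obtain ⟨j, hjJ, hje⟩ := Finset.exists_mem_eq_sup' hJne (fun i => gd i w)
    have hcont : Continuous (fun u => gd j u) := by
      rw [hgddef]
      exact (my_vinner_cont (a j)).div_const _
    have hlt : hmax w - ε < gd j w := by
      have hh : hmax w = gd j w := hje
      linarith [hh]
    have h1 : ∀ᶠ w' in 𝓝 w, hmax w - ε < gd j w' :=
      (hcont.tendsto w).eventually (eventually_gt_nhds hlt)
    exact h1.mono fun w' h => lt_of_lt_of_le h (Finset.le_sup' (fun i => gd i w') hjJ)
  have hvdot_ub : ∀ ε : ℝ, 0 < ε → ∀ᶠ w' in 𝓝 w, vinner v w' < vinner v w + ε := by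
    intro ε hε
    exact ((my_vinner_cont v).tendsto w).eventually
      (eventually_lt_nhds (by linarith : vinner v w < vinner v w + ε))
  -- computing the first subderivative
  have hsub : subderiv f x w = if T then ((hmax w : ℝ) : EReal) else ⊤ := by
    by_cases hT : T
    · rw [if_pos hT]
      refine le_antisymm ?_ ?_
      · rw [subderiv]
        apply hfreq
        refine ((L2 hT).and hev_pos).mono fun τ hτ => ?_
        rw [hτ.1, hm, ← EReal.coe_sub, ← EReal.coe_mul, EReal.coe_le_coe_iff]
        have hτ0 : τ ≠ 0 := ne_of_gt hτ.2
        have : τ⁻¹ * (m + τ * hmax w - m) = hmax w := by field_simp; ring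
        rw [this]
      · have key : ∀ ε : ℝ, 0 < ε → ((hmax w - ε : ℝ) : EReal) ≤ subderiv f x w := by
          intro ε hε
          rw [subderiv]
          refine le_liminf_of_le (by isBoundedDefault) ?_
          refine ((hev_pos.prod_inl _).and ((hmax_lb ε hε).prod_inr _)).mono fun p hp => ?_
          obtain ⟨hτ, hw'⟩ := hp
          rcases eq_or_ne (f (x + p.1 • p.2)) ⊤ with htop | hne
          · rw [htop, hm, EReal.top_sub_coe,
              EReal.mul_top_of_pos (by exact_mod_cast inv_pos.2 hτ)]
            exact le_top
          · have hρ : f (x + p.1 • p.2) = (((f (x + p.1 • p.2)).toReal : ℝ) : EReal) :=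
              (EReal.coe_toReal hne (hbot _)).symm
            set ρ := (f (x + p.1 • p.2)).toReal with hρdef
            have hlb : m + p.1 * hmax p.2 ≤ ρ := by
              have h := L1 p.1 p.2
              rw [hρ, EReal.coe_le_coe_iff] at h
              exact h
            rw [hρ, hm, ← EReal.coe_sub, ← EReal.coe_mul, EReal.coe_le_coe_iff]
            have h2 : p.1 * (hmax w - ε) ≤ ρ - m := by nlinarith
            calc hmax w - ε = p.1⁻¹ * (p.1 * (hmax w - ε)) := by field_simp
              _ ≤ p.1⁻¹ * (ρ - m) := mul_le_mul_of_nonneg_left h2 (inv_pos.2 hτ).le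
        by_contra hlt
        push_neg at hlt
        obtain ⟨z, hz1, hz2⟩ := EReal.exists_between_coe_real hlt
        rw [EReal.coe_lt_coe_iff] at hz2
        have h := key (hmax w - z) (by linarith)
        rw [show hmax w - (hmax w - z) = z by ring] at h
        exact absurd (lt_of_le_of_lt h hz1) (lt_irrefl _)
    · rw [if_neg hT]
      rw [hTdef] at hT
      push_neg at hT
      obtain ⟨i, hci, hact, hpos⟩ := hT
      have hev : ∀ᶠ w' in 𝓝 w, 0 < vinner (a i) w' :=
        ((my_vinner_cont (a i)).tendsto w).eventually (eventually_gt_nhds hpos)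
      refine top_le_iff.mp ?_
      rw [subderiv]
      refine le_liminf_of_le (by isBoundedDefault) ?_
      refine ((hev_pos.prod_inl _).and (hev.prod_inr _)).mono fun p hp => ?_
      have hnD : ¬ D (x + p.1 • p.2) := by
        intro hD
        have h := hD i hci
        rw [my_vinner_add_smul, hact] at h
        nlinarith [hp.1, hp.2]
      rw [hrep_top _ hnD, hm, EReal.top_sub_coe,
        EReal.mul_top_of_pos (by exact_mod_cast inv_pos.2 hp.1)]
  -- final case analysis
  by_cases hcrit : subderiv f x w = ((vinner v w : ℝ) : EReal)
  · rw [if_pos hcrit]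
    have hT : T := by
      by_contra hT
      rw [hsub, if_neg hT] at hcrit
      exact (EReal.coe_ne_top (vinner v w)) hcrit.symm
    have heq : hmax w = vinner v w := by
      rw [hsub, if_pos hT, EReal.coe_eq_coe_iff] at hcrit
      exact hcrit
    refine le_antisymm ?_ ?_
    · rw [secondSubderiv]
      apply hfreq
      refine ((L2 hT).and hev_pos).mono fun τ hτ => ?_
      rw [secondQuot, hτ.1, hm, ← EReal.coe_sub, ← EReal.coe_sub, ← EReal.coe_mul]
      have hz : (2 / τ ^ 2) * (m + τ * hmax w - m - τ * vinner v w) = 0 := by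
        rw [heq]; ring
      rw [hz]
      exact_mod_cast le_refl (0:ℝ)
    · rw [secondSubderiv]
      refine le_liminf_of_le (by isBoundedDefault) ?_
      refine (hev_pos.prod_inl _).mono fun p hp => ?_
      rw [secondQuot]
      rcases eq_or_ne (f (x + p.1 • p.2)) ⊤ with htop | hne
      · rw [htop, hm, EReal.top_sub_coe, EReal.top_sub_coe,
          EReal.mul_top_of_pos (by exact_mod_cast div_pos two_pos (pow_pos hp 2))]
        exact le_top
      · have hρ : f (x + p.1 • p.2) = (((f (x + p.1 • p.2)).toReal : ℝ) : EReal) :=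
          (EReal.coe_toReal hne (hbot _)).symm
        set ρ := (f (x + p.1 • p.2)).toReal with hρdef
        have hlb : m + p.1 * vinner v p.2 ≤ ρ := by
          have h := hv' p.1 p.2
          rw [hρ, EReal.coe_le_coe_iff] at h
          exact h
        rw [hρ, hm, ← EReal.coe_sub, ← EReal.coe_sub, ← EReal.coe_mul]
        have hnn : (0:ℝ) ≤ 2 / p.1 ^ 2 * (ρ - m - p.1 * vinner v p.2) := by
          apply mul_nonneg (div_pos two_pos (pow_pos hp 2)).le
          linarith
        exact_mod_cast hnn
  · rw [if_neg hcrit]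
    by_cases hT : T
    · have hlt2 : vinner v w < hmax w := by
        refine lt_of_le_of_ne (hv_le_hmax hT) fun h => hcrit ?_
        rw [hsub, if_pos hT, h]
      set δ : ℝ := hmax w - vinner v w with hδdef
      have hδ : 0 < δ := by rw [hδdef]; linarith
      rw [EReal.eq_top_iff_forall_lt]
      intro y
      have hkey : ((y + 1 : ℝ) : EReal) ≤ secondSubderiv vinner f x v w := by
        rw [secondSubderiv]
        refine le_liminf_of_le (by isBoundedDefault) ?_
        have hτev : ∀ᶠ τ in 𝓝[>] (0:ℝ), τ ∈ Set.Ioo (0:ℝ) (δ / (|y+1| + 1)) :=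
          eventually_of_mem
            (Ioo_mem_nhdsGT_of_mem ⟨le_refl 0, div_pos hδ (by positivity)⟩) fun τ h => h
        refine ((hτev.prod_inl _).and
          (((hmax_lb (δ/4) (by linarith)).and (hvdot_ub (δ/4) (by linarith))).prod_inr _)).mono
          fun p hp => ?_
        obtain ⟨hτIoo, hw1, hw2⟩ := hp
        have hτ : 0 < p.1 := hτIoo.1
        rw [secondQuot]
        rcases eq_or_ne (f (x + p.1 • p.2)) ⊤ with htop | hnet
        · rw [htop, hm, EReal.top_sub_coe, EReal.top_sub_coe,
            EReal.mul_top_of_pos (by exact_mod_cast div_pos two_pos (pow_pos hτ 2))]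
          exact le_top
        · have hρ : f (x + p.1 • p.2) = (((f (x + p.1 • p.2)).toReal : ℝ) : EReal) :=
            (EReal.coe_toReal hnet (hbot _)).symm
          set ρ := (f (x + p.1 • p.2)).toReal with hρdef
          have hlb : m + p.1 * hmax p.2 ≤ ρ := by
            have h := L1 p.1 p.2
            rw [hρ, EReal.coe_le_coe_iff] at h
            exact h
          rw [hρ, hm, ← EReal.coe_sub, ← EReal.coe_sub, ← EReal.coe_mul,
            EReal.coe_le_coe_iff]
          have hgap : δ / 2 ≤ hmax p.2 - vinner v p.2 := by
            have hδeq : δ = hmax w - vinner v w := hδdef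
            linarith
          have h1 : p.1 * (δ / 2) ≤ ρ - m - p.1 * vinner v p.2 := by
            nlinarith [mul_le_mul_of_nonneg_left hgap hτ.le]
          have h2 : δ / p.1 ≤ 2 / p.1 ^ 2 * (ρ - m - p.1 * vinner v p.2) := by
            have he : δ / p.1 = 2 / p.1 ^ 2 * (p.1 * (δ / 2)) := by
              field_simp
            rw [he]
            exact mul_le_mul_of_nonneg_left h1 (div_pos two_pos (pow_pos hτ 2)).le
          have h3 : y + 1 ≤ δ / p.1 := by
            have h4 : p.1 * (|y+1| + 1) < δ := (lt_div_iff₀ (by positivity)).1 hτIoo.2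
            have h5 : |y+1| + 1 < δ / p.1 := (lt_div_iff₀ hτ).2 (by nlinarith)
            linarith [le_abs_self (y+1)]
          linarith
      exact lt_of_lt_of_le (by exact_mod_cast lt_add_one y) hkey
    · rw [hTdef] at hT
      push_neg at hT
      obtain ⟨i, hci, hact, hpos⟩ := hT
      have hev : ∀ᶠ w' in 𝓝 w, 0 < vinner (a i) w' :=
        ((my_vinner_cont (a i)).tendsto w).eventually (eventually_gt_nhds hpos)
      refine top_le_iff.mp ?_
      rw [secondSubderiv]
      refine le_liminf_of_le (by isBoundedDefault) ?_
      refine ((hev_pos.prod_inl _).and (hev.prod_inr _)).mono fun p hp => ?_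
      have hnD : ¬ D (x + p.1 • p.2) := by
        intro hD
        have h := hD i hci
        rw [my_vinner_add_smul, hact] at h
        nlinarith [hp.1, hp.2]
      rw [secondQuot, hrep_top _ hnD, hm, EReal.top_sub_coe, EReal.top_sub_coe,
        EReal.mul_top_of_pos (by exact_mod_cast div_pos two_pos (pow_pos hp.1 2))]
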